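/- A truncated-geometric compound of NBM distributions is NBM: if M ~ TGeometric(ρ) (P(M=k) = ρ(1-ρ)^{k-1}, k ≥ 1), N_1, N_2, ... are i.i.d. with distribution f_N on {1,2,...}, and S_{N_j} are independent NBM(π,p) random variables, then S = ∑_{j=1}^M S_{N_j} has NBM(π*, p) distribution, where π* is the distribution of N* = ∑_{j=1}^M N_j. -/

import Mathlib

open MeasureTheory ProbabilityTheory

/-- The negative binomial probability function `nb(k,p)(x) = C(k+x-1,x) p^k (1-p)^x`. -/
noncomputable def nb (k : ℕ) (p : ℝ) (x : ℕ) : ℝ :=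
  (Nat.choose (k + x - 1) x : ℝ) * p ^ k * (1 - p) ^ x

section Aux

open scoped ENNReal

lemma hock (k x : ℕ) :
    ∑ y ∈ Finset.range (x + 1), Nat.choose (k + y - 1) y = Nat.choose (k + x) x := by
  induction x with
  | zero => simp
  | succ n ih =>
      rw [Finset.sum_range_succ, ih, show k + (n + 1) - 1 = k + n by omega,
        show k + (n + 1) = (k + n) + 1 by omega, Nat.choose_succ_succ]

lemma nb_mk_eq (p : ℝ) (k : ℕ) :
    PowerSeries.mk (nb k p) = (PowerSeries.mk (fun y => p * (1 - p) ^ y)) ^ k := by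
  induction k with
  | zero =>
      ext x
      rw [pow_zero, PowerSeries.coeff_mk, PowerSeries.coeff_one]
      cases x with
      | zero => simp [nb]
      | succ n =>
          simp only [Nat.succ_ne_zero, if_false, nb]
          rw [Nat.choose_eq_zero_of_lt (by omega)]
          simp
  | succ k ih =>
      rw [pow_succ, ← ih]
      ext x
      rw [PowerSeries.coeff_mk, PowerSeries.coeff_mul,
        Finset.Nat.sum_antidiagonal_eq_sum_range_succ_mk]
      simp only [PowerSeries.coeff_mk]
      have h1 : ∀ y ∈ Finset.range (x + 1),
          nb k p y * (p * (1 - p) ^ (x - y)) =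
            (Nat.choose (k + y - 1) y : ℝ) * (p ^ (k + 1) * (1 - p) ^ x) := by
        intro y hy
        have hyx : y ≤ x := Nat.lt_succ_iff.mp (Finset.mem_range.mp hy)
        have : (1 - p) ^ y * (1 - p) ^ (x - y) = (1 - p) ^ x := by
          rw [← pow_add, Nat.add_sub_cancel' hyx]
        unfold nb
        rw [← this]; ring
      rw [Finset.sum_congr rfl h1, ← Finset.sum_mul, ← Nat.cast_sum, hock]
      unfold nb
      rw [show k + 1 + x - 1 = k + x by omega]
      ring

lemma nb_conv (p : ℝ) (k l x : ℕ) :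
    ∑ y ∈ Finset.range (x + 1), nb k p y * nb l p (x - y) = nb (k + l) p x := by
  have h := congrArg (PowerSeries.coeff (R := ℝ) x) (nb_mk_eq p (k + l))
  rw [pow_add, ← nb_mk_eq, ← nb_mk_eq, PowerSeries.coeff_mul,
    Finset.Nat.sum_antidiagonal_eq_sum_range_succ_mk, PowerSeries.coeff_mk] at h
  simp only [PowerSeries.coeff_mk] at h
  exact h.symm

lemma nb_nonneg {p : ℝ} (hp0 : 0 ≤ p) (hp1 : p ≤ 1) (k x : ℕ) : 0 ≤ nb k p x := by
  unfold nb
  have : (0:ℝ) ≤ 1 - p := by linarith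
  positivity

lemma nb_summable {p : ℝ} (hp0 : 0 < p) (hp1 : p < 1) (x : ℕ) :
    Summable (fun k => nb k p x) := by
  have hg : Summable (fun n : ℕ => (n : ℝ) ^ x * p ^ n) :=
    summable_pow_mul_geometric_of_norm_lt_one x (by
      rw [Real.norm_eq_abs, abs_of_pos hp0]; exact hp1)
  have hg2 : Summable (fun k : ℕ => ((k + x : ℕ) : ℝ) ^ x * p ^ (k + x)) :=
    (summable_nat_add_iff x).mpr hg
  have hg3 : Summable (fun k : ℕ => ((k + x : ℕ) : ℝ) ^ x * p ^ k * (1 - p) ^ x) := by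
    have := hg2.mul_right ((p ^ x)⁻¹ * (1 - p) ^ x)
    refine this.congr fun k => ?_
    rw [pow_add]
    field_simp
  refine Summable.of_nonneg_of_le (fun k => nb_nonneg hp0.le hp1.le k x) (fun k => ?_) hg3
  unfold nb
  have hc : (Nat.choose (k + x - 1) x : ℝ) ≤ ((k + x : ℕ) : ℝ) ^ x := by
    calc (Nat.choose (k + x - 1) x : ℝ) ≤ ((k + x - 1 : ℕ) : ℝ) ^ x := by
          exact_mod_cast Nat.choose_le_pow (k + x - 1) x
      _ ≤ ((k + x : ℕ) : ℝ) ^ x := by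
          apply pow_le_pow_left₀ (by positivity)
          exact_mod_cast Nat.sub_le _ _
  have h1 : (0:ℝ) ≤ 1 - p := by linarith
  have h2 : (0:ℝ) ≤ p ^ k := by positivity
  have h3 : (0:ℝ) ≤ (1 - p) ^ x := by positivity
  calc (Nat.choose (k + x - 1) x : ℝ) * p ^ k * (1 - p) ^ x
      ≤ ((k + x : ℕ) : ℝ) ^ x * p ^ k * (1 - p) ^ x := by
        apply mul_le_mul_of_nonneg_right _ h3
        exact mul_le_mul_of_nonneg_right hc h2
    _ = _ := rfl

variable {Ω : Type*} [MeasureSpace Ω] [IsProbabilityMeasure (ℙ : Measure Ω)]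

omit [IsProbabilityMeasure (ℙ : Measure Ω)] in
lemma measure_add_eq (A B : Ω → ℕ) (hA : Measurable A) (hB : Measurable B)
    (h : IndepFun A B ℙ) (x : ℕ) :
    ℙ {ω | A ω + B ω = x} =
      ∑ y ∈ Finset.range (x + 1), ℙ {ω | A ω = y} * ℙ {ω | B ω = x - y} := by
  have hset : {ω | A ω + B ω = x} =
      ⋃ y ∈ Finset.range (x + 1), (A ⁻¹' {y} ∩ B ⁻¹' {x - y}) := by
    ext ω
    simp only [Set.mem_setOf_eq, Set.mem_iUnion, Finset.mem_range, Set.mem_inter_iff,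
      Set.mem_preimage, Set.mem_singleton_iff, exists_prop]
    constructor
    · intro hx
      exact ⟨A ω, by omega, rfl, by omega⟩
    · rintro ⟨y, hy, rfl, hB'⟩
      omega
  rw [hset, measure_biUnion_finset]
  · exact Finset.sum_congr rfl fun y hy =>
      h.measure_inter_preimage_eq_mul _ _ (measurableSet_singleton y)
        (measurableSet_singleton (x - y))
  · intro y hy z hz hyz
    simp only [Function.onFun]
    apply Set.disjoint_left.mpr
    rintro ω ⟨h1, -⟩ ⟨h2, -⟩
    exact hyz (h1.symm.trans h2)
  · intro y hy
    exact (hA (measurableSet_singleton y)).inter (hB (measurableSet_singleton (x - y)))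

omit [IsProbabilityMeasure (ℙ : Measure Ω)] in
lemma decomp (M : Ω → ℕ) (S : ℕ → Ω → ℕ) (hM : Measurable M)
    (hS : ∀ j, Measurable (S j)) (hMS : IndepFun M (fun ω j => S j ω) ℙ) (x : ℕ) :
    ℙ {ω | ∑ j ∈ Finset.range (M ω), S j ω = x} =
      ∑' m, ℙ {ω | M ω = m} * ℙ {ω | ∑ j ∈ Finset.range m, S j ω = x} := by
  have hT : Measurable (fun ω j => S j ω) := measurable_pi_lambda _ hS
  have hBmeas : ∀ m : ℕ, MeasurableSet {g : ℕ → ℕ | ∑ j ∈ Finset.range m, g j = x} := by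
    intro m
    have : Measurable (fun g : ℕ → ℕ => ∑ j ∈ Finset.range m, g j) :=
      Finset.measurable_sum _ fun i _ => measurable_pi_apply i
    exact this (measurableSet_singleton x)
  have hset : {ω | ∑ j ∈ Finset.range (M ω), S j ω = x} =
      ⋃ m, (M ⁻¹' {m} ∩ (fun ω j => S j ω) ⁻¹' {g | ∑ j ∈ Finset.range m, g j = x}) := by
    ext ω
    simp only [Set.mem_setOf_eq, Set.mem_iUnion, Set.mem_inter_iff, Set.mem_preimage,
      Set.mem_singleton_iff]
    constructor
    · intro hx; exact ⟨M ω, rfl, hx⟩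
    · rintro ⟨m, rfl, hx⟩; exact hx
  rw [hset, measure_iUnion]
  · refine tsum_congr fun m => ?_
    exact hMS.measure_inter_preimage_eq_mul _ _ (measurableSet_singleton m) (hBmeas m)
  · intro m n hmn
    simp only [Function.onFun]
    apply Set.disjoint_left.mpr
    rintro ω ⟨h1, -⟩ ⟨h2, -⟩
    exact hmn (h1.symm.trans h2)
  · intro m
    exact (hM (measurableSet_singleton m)).inter (hT (hBmeas m))

/-- `m`-fold convolution power of a mass function `G`. -/
noncomputable def FC (G : ℕ → ℝ≥0∞) : ℕ → ℕ → ℝ≥0∞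
  | 0, k => if k = 0 then 1 else 0
  | (m + 1), k => ∑ kl ∈ Finset.HasAntidiagonal.antidiagonal k, FC G m kl.1 * G kl.2

lemma tsum_tsum_antidiagonal (F : ℕ → ℕ → ℝ≥0∞) :
    ∑' k, ∑' l, F k l = ∑' n, ∑ kl ∈ Finset.HasAntidiagonal.antidiagonal n, F kl.1 kl.2 := by
  rw [← ENNReal.tsum_prod]
  rw [← Finset.HasAntidiagonal.sigmaAntidiagonalEquivProd.tsum_eq (fun p : ℕ × ℕ => F p.1 p.2)]
  rw [ENNReal.tsum_sigma']
  refine tsum_congr fun n => ?_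
  rw [← Finset.tsum_subtype]
  rfl

lemma iid_sum_pmf (S : ℕ → Ω → ℕ) (hSm : ∀ j, Measurable (S j))
    (hSi : iIndepFun S ℙ)
    (G : ℕ → ℝ≥0∞) (e : ℕ → ℕ → ℝ≥0∞)
    (he0 : ∀ x, e 0 x = if x = 0 then 1 else 0)
    (hconv : ∀ k l x, ∑ y ∈ Finset.range (x + 1), e k y * e l (x - y) = e (k + l) x)
    (hpmf : ∀ j z, ℙ {ω | S j ω = z} = ∑' k, G k * e k z) :
    ∀ m x, ℙ {ω | ∑ j ∈ Finset.range m, S j ω = x} = ∑' k, FC G m k * e k x := by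
  intro m
  induction m with
  | zero =>
      intro x
      have h1 : ∑' k, FC G 0 k * e k x = e 0 x := by
        rw [tsum_eq_single 0]
        · simp [FC]
        · intro k hk; simp [FC, hk]
      rw [h1, he0]
      simp only [Finset.range_zero, Finset.sum_empty]
      by_cases hx : x = 0
      · subst hx; simp
      · simp [hx, Ne.symm hx]
  | succ m ih =>
      intro x
      have hind : IndepFun (fun ω => ∑ j ∈ Finset.range m, S j ω) (S m) ℙ := by
        have h := hSi.indepFun_sum_range_succ hSm m
        have heq : (∑ j ∈ Finset.range m, S j) = fun ω => ∑ j ∈ Finset.range m, S j ω := by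
          funext ω; simp [Finset.sum_apply]
        rwa [heq] at h
      have hA : Measurable (fun ω => ∑ j ∈ Finset.range m, S j ω) :=
        Finset.measurable_sum _ fun i _ => hSm i
      have hstep : {ω | ∑ j ∈ Finset.range (m + 1), S j ω = x} =
          {ω | (∑ j ∈ Finset.range m, S j ω) + S m ω = x} := by
        ext ω; simp [Finset.sum_range_succ]
      rw [hstep, measure_add_eq _ _ hA (hSm m) hind x]
      have hterm : ∀ y ∈ Finset.range (x + 1),
          ℙ {ω | ∑ j ∈ Finset.range m, S j ω = y} * ℙ {ω | S m ω = x - y} =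
            ∑' k, ∑' l, FC G m k * G l * (e k y * e l (x - y)) := by
        intro y hy
        rw [ih y, hpmf m (x - y), ← ENNReal.tsum_mul_right]
        refine tsum_congr fun k => ?_
        rw [← ENNReal.tsum_mul_left]
        refine tsum_congr fun l => ?_
        ring
      rw [Finset.sum_congr rfl hterm]
      rw [← Summable.tsum_finsetSum (fun i _ => ENNReal.summable)]
      have h2 : ∀ k, ∑ y ∈ Finset.range (x + 1), ∑' l, FC G m k * G l * (e k y * e l (x - y)) =
          ∑' l, FC G m k * G l * e (k + l) x := by
        intro k
        rw [← Summable.tsum_finsetSum (fun i _ => ENNReal.summable)]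
        refine tsum_congr fun l => ?_
        rw [← Finset.mul_sum, hconv]
      rw [tsum_congr h2, tsum_tsum_antidiagonal (fun k l => FC G m k * G l * e (k + l) x)]
      refine tsum_congr fun n => ?_
      show _ = FC G (m + 1) n * e n x
      rw [FC, Finset.sum_mul]
      refine Finset.sum_congr rfl fun kl hkl => ?_
      rw [Finset.HasAntidiagonal.mem_antidiagonal] at hkl
      rw [hkl]

end Aux

open scoped ENNReal

/-- ENNReal version of `nb`. -/
noncomputable def eb (p : ℝ) (k x : ℕ) : ℝ≥0∞ := ENNReal.ofReal (nb k p x)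

/-- Kronecker delta mass function. -/
noncomputable def dd (k x : ℕ) : ℝ≥0∞ := if x = k then 1 else 0

lemma eb_zero (p : ℝ) (x : ℕ) : eb p 0 x = if x = 0 then 1 else 0 := by
  unfold eb
  cases x with
  | zero => simp [nb]
  | succ n =>
      simp only [Nat.succ_ne_zero, if_false, nb]
      rw [show 0 + (n + 1) - 1 = n by omega, Nat.choose_eq_zero_of_lt (by omega)]
      simp

lemma eb_conv {p : ℝ} (hp0 : 0 ≤ p) (hp1 : p ≤ 1) (k l x : ℕ) :
    ∑ y ∈ Finset.range (x + 1), eb p k y * eb p l (x - y) = eb p (k + l) x := by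
  have h1 : ∀ y ∈ Finset.range (x + 1),
      eb p k y * eb p l (x - y) = ENNReal.ofReal (nb k p y * nb l p (x - y)) :=
    fun y _ => (ENNReal.ofReal_mul (nb_nonneg hp0 hp1 k y)).symm
  rw [Finset.sum_congr rfl h1,
    ← ENNReal.ofReal_sum_of_nonneg
      (fun y _ => mul_nonneg (nb_nonneg hp0 hp1 _ _) (nb_nonneg hp0 hp1 _ _)),
    nb_conv]
  rfl

lemma dd_zero (x : ℕ) : dd 0 x = if x = 0 then 1 else 0 := rfl

lemma dd_conv (k l x : ℕ) :
    ∑ y ∈ Finset.range (x + 1), dd k y * dd l (x - y) = dd (k + l) x := by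
  unfold dd
  rcases le_or_gt k x with hk | hk
  · rw [Finset.sum_eq_single k]
    · rw [if_pos rfl, one_mul]
      by_cases h : x - k = l
      · rw [if_pos h, if_pos (by omega)]
      · rw [if_neg h, if_neg (by omega)]
    · intro y hy hne
      rw [if_neg hne, zero_mul]
    · intro hk'
      exact absurd (Finset.mem_range.mpr (by omega)) hk'
  · rw [Finset.sum_eq_zero, eq_comm, if_neg (by omega)]
    intro y hy
    rw [Finset.mem_range] at hy
    rw [if_neg (by omega), zero_mul]

/-- A truncated-geometric compound of NBM distributions is NBM: if
`M ~ TGeometric ρ` (`P(M = m) = ρ(1-ρ)^{m-1}`, `m ≥ 1`), and `S₁, S₂, ...` are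
i.i.d. `NBM(π, p)` random variables independent of `M`, then
`S = ∑_{j=1}^M S_j` has `NBM(π*, p)` distribution where `π*` is the distribution
of `N* = ∑_{j=1}^M N_j`, the `N_j` being i.i.d. with distribution `π = f`,
independent of `M' ~ TGeometric ρ`. -/
theorem compound_tgeom_nbm
    {Ω Ω' : Type*} [MeasureSpace Ω] [IsProbabilityMeasure (ℙ : Measure Ω)]
    [MeasureSpace Ω'] [IsProbabilityMeasure (ℙ : Measure Ω')]
    (p ρ : ℝ) (hp0 : 0 < p) (hp1 : p < 1) (hρ0 : 0 < ρ) (hρ1 : ρ < 1)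
    (f : ℕ → ℝ) (hf0 : f 0 = 0) (hf : ∀ k, 0 ≤ f k) (hfsum : ∑' k : ℕ, f k = 1)
    (M : Ω → ℕ) (S : ℕ → Ω → ℕ) (M' : Ω' → ℕ) (N : ℕ → Ω' → ℕ)
    (hMmeas : Measurable M) (hSmeas : ∀ j, Measurable (S j))
    (hM'meas : Measurable M') (hNmeas : ∀ j, Measurable (N j))
    (hM : ∀ m, 1 ≤ m → (ℙ {ω | M ω = m}).toReal = ρ * (1 - ρ) ^ (m - 1))
    (hM0 : ℙ {ω | M ω = 0} = 0)
    (hS : ∀ j x, (ℙ {ω | S j ω = x}).toReal = ∑' k : ℕ, f k * nb k p x)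
    (hSindep : iIndepFun S ℙ)
    (hMS : IndepFun M (fun ω j => S j ω) ℙ)
    (hM' : ∀ m, 1 ≤ m → (ℙ {ω | M' ω = m}).toReal = ρ * (1 - ρ) ^ (m - 1))
    (hM'0 : ℙ {ω | M' ω = 0} = 0)
    (hN : ∀ j k, (ℙ {ω | N j ω = k}).toReal = f k)
    (hNindep : iIndepFun N ℙ)
    (hM'N : IndepFun M' (fun ω j => N j ω) ℙ)
    (x : ℕ) :
    (ℙ {ω | ∑ j ∈ Finset.range (M ω), S j ω = x}).toReal =
      ∑' k : ℕ, (ℙ {ω | ∑ j ∈ Finset.range (M' ω), N j ω = k}).toReal * nb k p x := by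
  classical
  have hnbnn : ∀ k z, 0 ≤ nb k p z := fun k z => nb_nonneg hp0.le hp1.le k z
  have hfsummable : Summable f := by
    by_contra h
    rw [tsum_eq_zero_of_not_summable h] at hfsum
    norm_num at hfsum
  have hfle1 : ∀ k, f k ≤ 1 := by
    intro k
    rw [← hfsum]
    exact Summable.le_tsum hfsummable k fun j _ => hf j
  -- ENNReal pmf versions
  have hSpmf : ∀ j z, ℙ {ω | S j ω = z} = ∑' k, ENNReal.ofReal (f k) * eb p k z := by
    intro j z
    have hsummP : Summable (fun k => f k * nb k p z) :=
      Summable.of_nonneg_of_le (fun k => mul_nonneg (hf k) (hnbnn k z))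
        (fun k => by
          have := mul_le_mul_of_nonneg_right (hfle1 k) (hnbnn k z)
          simpa using this)
        (nb_summable hp0 hp1 z)
    rw [← ENNReal.ofReal_toReal (measure_ne_top ℙ _), hS j z,
      ENNReal.ofReal_tsum_of_nonneg (fun k => mul_nonneg (hf k) (hnbnn k z)) hsummP]
    exact tsum_congr fun k => ENNReal.ofReal_mul (hf k)
  have hNpmf : ∀ j z, ℙ {ω | N j ω = z} = ∑' k, ENNReal.ofReal (f k) * dd k z := by
    intro j z
    rw [tsum_eq_single z]
    · unfold dd
      rw [if_pos rfl, mul_one, ← ENNReal.ofReal_toReal (measure_ne_top ℙ _), hN j z]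
    · intro k hk
      unfold dd
      rw [if_neg (Ne.symm hk), mul_zero]
  have hMM' : ∀ m, ℙ {ω | M ω = m} = ℙ {ω | M' ω = m} := by
    intro m
    cases m with
    | zero => rw [hM0, hM'0]
    | succ n =>
        have h := (hM (n + 1) (by omega)).trans (hM' (n + 1) (by omega)).symm
        exact (ENNReal.toReal_eq_toReal_iff' (measure_ne_top _ _) (measure_ne_top _ _)).mp h
  have hSsum := iid_sum_pmf S hSmeas hSindep (fun k => ENNReal.ofReal (f k)) (eb p)
    (eb_zero p) (eb_conv hp0.le hp1.le) hSpmf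
  have hNsum := iid_sum_pmf N hNmeas hNindep (fun k => ENNReal.ofReal (f k)) dd
    dd_zero dd_conv hNpmf
  have hNm : ∀ m k, ℙ {ω | ∑ j ∈ Finset.range m, N j ω = k} =
      FC (fun k => ENNReal.ofReal (f k)) m k := by
    intro m k
    rw [hNsum m k, tsum_eq_single k]
    · unfold dd; rw [if_pos rfl, mul_one]
    · intro n hn
      unfold dd
      rw [if_neg (Ne.symm hn), mul_zero]
  have key : ℙ {ω | ∑ j ∈ Finset.range (M ω), S j ω = x} =
      ∑' k, ℙ {ω | ∑ j ∈ Finset.range (M' ω), N j ω = k} * eb p k x := by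
    rw [decomp M S hMmeas hSmeas hMS x]
    calc ∑' m, ℙ {ω | M ω = m} * ℙ {ω | ∑ j ∈ Finset.range m, S j ω = x}
        = ∑' m, ∑' k, ℙ {ω | M' ω = m} *
            (FC (fun k => ENNReal.ofReal (f k)) m k * eb p k x) := by
          refine tsum_congr fun m => ?_
          rw [hMM' m, hSsum m x, ENNReal.tsum_mul_left]
      _ = ∑' k, ∑' m, ℙ {ω | M' ω = m} *
            (FC (fun k => ENNReal.ofReal (f k)) m k * eb p k x) := ENNReal.tsum_comm
      _ = ∑' k, (∑' m, ℙ {ω | M' ω = m} * FC (fun k => ENNReal.ofReal (f k)) m k) *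
            eb p k x := by
          refine tsum_congr fun k => ?_
          rw [← ENNReal.tsum_mul_right]
          exact tsum_congr fun m => (mul_assoc _ _ _).symm
      _ = ∑' k, ℙ {ω | ∑ j ∈ Finset.range (M' ω), N j ω = k} * eb p k x := by
          refine tsum_congr fun k => ?_
          rw [decomp M' N hM'meas hNmeas hM'N k]
          congr 1
          exact tsum_congr fun m => by rw [hNm m k]
  have hne : ∀ k : ℕ, ℙ {ω | ∑ j ∈ Finset.range (M' ω), N j ω = k} * eb p k x ≠ ⊤ :=
    fun k => ENNReal.mul_ne_top (measure_ne_top _ _)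
      (by unfold eb; exact ENNReal.ofReal_ne_top)
  rw [key, ENNReal.tsum_toReal_eq hne]
  refine tsum_congr fun k => ?_
  rw [ENNReal.toReal_mul]
  unfold eb
  rw [ENNReal.toReal_ofReal (hnbnn k x)]
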